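/- Let G be a connected locally finite simple graph and let D ⊆ E(G) be an edge set whose intersection with every bond of G is finite and of even cardinality. Then D is the union of a pairwise disjoint (countable) family of finite circuits of G. -/

import Mathlib

open Set

variable {V : Type*}

/-- The edge set of a cycle of `G` (a finite circuit). -/
def IsCircuit (G : SimpleGraph V) (C : Set (Sym2 V)) : Prop :=
  ∃ (v : V) (w : G.Walk v v), w.IsCycle ∧ C = {e | e ∈ w.edges}

/-- The cut `E(A, V∖A)`: edges of `G` with exactly one endvertex in `A`. -/
def cutEdges (G : SimpleGraph V) (A : Set V) : Set (Sym2 V) :=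
  {e | ∃ x y, G.Adj x y ∧ x ∈ A ∧ y ∉ A ∧ e = s(x, y)}

/-- `C` is a cut of `G`. -/
def IsCut (G : SimpleGraph V) (C : Set (Sym2 V)) : Prop :=
  ∃ A : Set V, C = cutEdges G A

/-- A bond is a ⊆-minimal nonempty cut. -/
def IsBond (G : SimpleGraph V) (B : Set (Sym2 V)) : Prop :=
  IsCut G B ∧ B ≠ ∅ ∧ ∀ C, IsCut G C → C ≠ ∅ → C ⊆ B → C = B

/-- Two edge sets are orthogonal: their intersection is finite and of even cardinality. -/
def EvenInter (D F : Set (Sym2 V)) : Prop :=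
  (D ∩ F).Finite ∧ Even (D ∩ F).ncard

/-- A ray in `G`. -/
def IsRay (G : SimpleGraph V) (R : ℕ → V) : Prop :=
  Function.Injective R ∧ ∀ n, G.Adj (R n) (R (n + 1))

/-- A double ray in `G`. -/
def IsDoubleRay (G : SimpleGraph V) (R : ℤ → V) : Prop :=
  Function.Injective R ∧ ∀ n, G.Adj (R n) (R (n + 1))

/-- The edge set of a double ray. -/
def doubleRayEdges (R : ℤ → V) : Set (Sym2 V) :=
  {e | ∃ n : ℤ, e = s(R n, R (n + 1))}

/-- `D` is the edge set of some double ray of `G`. -/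
def IsDoubleRayEdgeSet (G : SimpleGraph V) (D : Set (Sym2 V)) : Prop :=
  ∃ R : ℤ → V, IsDoubleRay G R ∧ D = doubleRayEdges R

/-- `a` and `b` are joined by a walk of `G` all of whose vertices avoid `S`,
i.e. they lie in a common component of `G − S`. -/
def ConnAvoiding (G : SimpleGraph V) (S : Set V) (a b : V) : Prop :=
  ∃ w : G.Walk a b, ∀ x ∈ w.support, x ∉ S

/-- `v` lies in `C(S,R)`, the component of `G − S` containing a tail of the ray `R`. -/
def InC (G : SimpleGraph V) (S : Set V) (R : ℕ → V) (v : V) : Prop :=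
  ∃ m : ℕ, (∀ n, R (m + n) ∉ S) ∧ ConnAvoiding G S v (R m)

/-- The rays `R` and `R'` are equivalent (lie in the same end): for every finite `S`
some component of `G − S` contains a tail of both. -/
def RayEquiv (G : SimpleGraph V) (R R' : ℕ → V) : Prop :=
  ∀ S : Set V, S.Finite → ∃ m m', (∀ n, R (m + n) ∉ S) ∧ (∀ n, R' (m' + n) ∉ S) ∧
    ConnAvoiding G S (R m) (R' m')

/-- The sequence `v` of vertices converges to the end of the ray `R`: for every finite `S`
all but finitely many `v i` lie in `C(S,R)`. -/
def ConvergesTo (G : SimpleGraph V) (R : ℕ → V) (v : ℕ → V) : Prop :=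
  ∀ S : Set V, S.Finite → {i : ℕ | ¬ InC G S R (v i)}.Finite

/-- `F` is the vertex set of a `k`-fan from `u` to `Y`: a union of `k` paths starting
at `u`, pairwise sharing no vertex other than `u`, ending in `k` distinct vertices of `Y`. -/
def IsFan (G : SimpleGraph V) (k : ℕ) (u : V) (Y : Set V) (F : Set V) : Prop :=
  ∃ (ends : Fin k → V) (P : ∀ i, G.Walk u (ends i)),
    (∀ i, (P i).IsPath) ∧ (∀ i, ends i ∈ Y) ∧ Function.Injective ends ∧
    (∀ i j, i ≠ j → ∀ x, x ∈ (P i).support → x ∈ (P j).support → x = u) ∧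
    F = ⋃ i, {x | x ∈ (P i).support}

/-- `L` is the vertex set of a `k`-linkage from `x` to `y`: a union of `k` paths from
`x` to `y` pairwise sharing no vertices other than `x` and `y`. -/
def IsLinkage (G : SimpleGraph V) (k : ℕ) (x y : V) (L : Set V) : Prop :=
  ∃ P : Fin k → G.Walk x y,
    (∀ i, (P i).IsPath) ∧ Function.Injective P ∧
    (∀ i j, i ≠ j → ∀ z, z ∈ (P i).support → z ∈ (P j).support → z = x ∨ z = y) ∧
    L = ⋃ i, {z | z ∈ (P i).support}

/-- The end represented by the ray `R` is `k`-padded: for every equivalent ray `R'`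
there is a finite `S` such that every vertex of `C(S,R')` admits a `k`-fan to the
image of `R'` in `G`. -/
def IsPaddedEnd (G : SimpleGraph V) (k : ℕ) (R : ℕ → V) : Prop :=
  ∀ R' : ℕ → V, IsRay G R' → RayEquiv G R R' →
    ∃ S : Set V, S.Finite ∧ ∀ v, InC G S R' v → ∃ F, IsFan G k v (Set.range R') F

/-- `G` is `k`-padded at infinity: every end of `G` is `k`-padded. -/
def PaddedAtInfinity (G : SimpleGraph V) (k : ℕ) : Prop :=
  ∀ R : ℕ → V, IsRay G R → IsPaddedEnd G k R

/-- `G` is `k`-connected: it has more than `k` vertices and deleting fewer than `k`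
vertices leaves it connected. -/
def KConnected (G : SimpleGraph V) (k : ℕ) : Prop :=
  (k : ℕ∞) < (Set.univ : Set V).encard ∧
  ∀ S : Set V, S.Finite → S.ncard < k → (G.induce (Sᶜ : Set V)).Connected

/-- The algebraic cycle space: edge sets meeting every vertex in an even number of edges. -/
def CAlg (G : SimpleGraph V) : Set (Set (Sym2 V)) :=
  {D | D ⊆ G.edgeSet ∧ ∀ v : V, {e ∈ D | v ∈ e}.Finite ∧ Even {e ∈ D | v ∈ e}.ncard}

/-- The finite-cycle space: symmetric-difference sums of finitely many finite circuits. -/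
def CFin (G : SimpleGraph V) : Set (Set (Sym2 V)) :=
  {D | ∃ l : List (Set (Sym2 V)), (∀ C ∈ l, IsCircuit G C) ∧ D = l.foldr symmDiff ∅}

section helpers
variable {G : SimpleGraph V} {A S Z : Set V} {x y v a b : V}

lemma mem_cutEdges_iff (hxy : G.Adj x y) :
    s(x,y) ∈ cutEdges G A ↔ ((x ∈ A ∧ y ∉ A) ∨ (y ∈ A ∧ x ∉ A)) := by
  constructor
  · rintro ⟨p, q, hpq, hp, hq, he⟩
    rw [Sym2.eq_iff] at he
    rcases he with ⟨rfl, rfl⟩ | ⟨rfl, rfl⟩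
    · exact Or.inl ⟨hp, hq⟩
    · exact Or.inr ⟨hp, hq⟩
  · rintro (⟨hx, hy⟩ | ⟨hy, hx⟩)
    · exact ⟨x, y, hxy, hx, hy, rfl⟩
    · exact ⟨y, x, hxy.symm, hy, hx, Sym2.eq_swap.symm⟩

lemma cutEdges_compl (G : SimpleGraph V) (A : Set V) : cutEdges G (Aᶜ) = cutEdges G A := by
  ext e
  constructor
  · rintro ⟨p, q, hpq, hp, hq, rfl⟩
    exact ⟨q, p, hpq.symm, by simpa using hq, by simpa using hp, Sym2.eq_swap.symm⟩
  · rintro ⟨p, q, hpq, hp, hq, rfl⟩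
    exact ⟨q, p, hpq.symm, by simpa using hq, by simpa using hp, Sym2.eq_swap.symm⟩

open Classical in
lemma walk_cut_parity (A : Set V) :
    ∀ {u v : V} (p : G.Walk u v),
      (Even (p.edges.countP (fun e => decide (e ∈ cutEdges G A))) ↔ (u ∈ A ↔ v ∈ A))
  | _, _, SimpleGraph.Walk.nil => by simp
  | u, v, SimpleGraph.Walk.cons (v := w) h q => by
    rw [SimpleGraph.Walk.edges_cons, List.countP_cons]
    simp only [decide_eq_true_eq]
    have ih := walk_cut_parity A q
    by_cases hc : s(u, w) ∈ cutEdges G A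
    · have hdiff := (mem_cutEdges_iff h).mp hc
      rw [if_pos hc, Nat.even_add_one, ih]
      tauto
    · have hsame : (u ∈ A ↔ w ∈ A) := by
        have := (mem_cutEdges_iff h).not.mp hc
        push_neg at this
        tauto
      rw [if_neg hc, add_zero, ih]
      tauto

end helpers

section helpers2
variable {G : SimpleGraph V} {A S Z : Set V} {x y v a b : V} {C D F : Set (Sym2 V)}

lemma circuit_inter_cut (hC : IsCircuit G C) (A : Set V) :
    (C ∩ cutEdges G A).Finite ∧ Even (C ∩ cutEdges G A).ncard := by
  classical
  obtain ⟨v, w, hw, rfl⟩ := hC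
  set l := w.edges.filter (fun e => decide (e ∈ cutEdges G A)) with hl
  have hnodup : l.Nodup := hw.edges_nodup.filter _
  have hset : {e | e ∈ w.edges} ∩ cutEdges G A = ↑l.toFinset := by
    ext e
    simp [hl, List.mem_filter, decide_eq_true_eq]
  rw [hset]
  refine ⟨(l.toFinset : Set (Sym2 V)).toFinite, ?_⟩
  rw [Set.ncard_coe_finset, List.toFinset_card_of_nodup hnodup, hl,
    ← List.countP_eq_length_filter]
  exact (walk_cut_parity A w).mpr Iff.rfl

/-- Reachability by a walk whose support lies in `S`. -/
def Reach (G : SimpleGraph V) (S : Set V) (x v : V) : Prop :=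
  ∃ w : G.Walk x v, ∀ u ∈ w.support, u ∈ S

lemma Reach.mem_right (h : Reach G S x v) : v ∈ S :=
  h.choose_spec v h.choose.end_mem_support

lemma Reach.mem_left (h : Reach G S x v) : x ∈ S :=
  h.choose_spec x h.choose.start_mem_support

lemma reach_refl (hx : x ∈ S) : Reach G S x x :=
  ⟨SimpleGraph.Walk.nil, by simpa using hx⟩

lemma Reach.step (h : Reach G S x a) (hab : G.Adj a b) (hb : b ∈ S) : Reach G S x b := by
  obtain ⟨w, hw⟩ := h
  refine ⟨w.append (SimpleGraph.Walk.cons hab SimpleGraph.Walk.nil), ?_⟩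
  intro u hu
  rw [SimpleGraph.Walk.support_append] at hu
  rcases List.mem_append.mp hu with hu | hu
  · exact hw u hu
  · simp at hu
    subst hu
    exact hb

lemma reach_of_mem_support (w : G.Walk x v) (hw : ∀ u ∈ w.support, u ∈ S) {u : V}
    (hu : u ∈ w.support) : Reach G S x u := by
  classical
  exact ⟨w.takeUntil u hu, fun z hz => hw z (w.support_takeUntil_subset hu hz)⟩

lemma reach_same_side (hedge : ∀ a b, G.Adj a b → a ∈ S → b ∈ S → (a ∈ Z ↔ b ∈ Z)) :
    ∀ {x v : V} (w : G.Walk x v), (∀ u ∈ w.support, u ∈ S) → (x ∈ Z ↔ v ∈ Z)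
  | _, _, SimpleGraph.Walk.nil, _ => Iff.rfl
  | x, v, SimpleGraph.Walk.cons (v := w) h q, hw => by
    have h1 : x ∈ S := hw x (by simp)
    have h2 : w ∈ S := hw w (by simp)
    exact (hedge _ _ h h1 h2).trans
      (reach_same_side hedge q (fun u hu => hw u (by simp [SimpleGraph.Walk.support_cons, hu])))

lemma walk_prop {P : V → Prop} (hstep : ∀ a b, G.Adj a b → P a → P b) :
    ∀ {x v : V}, G.Walk x v → P x → P v
  | _, _, SimpleGraph.Walk.nil, hx => hx
  | _, _, SimpleGraph.Walk.cons h q, hx => walk_prop hstep q (hstep _ _ h hx)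

/-- Reachability by a walk whose edges lie in `F`. -/
def ReachE (G : SimpleGraph V) (F : Set (Sym2 V)) (x v : V) : Prop :=
  ∃ w : G.Walk x v, ∀ f ∈ w.edges, f ∈ F

lemma reachE_refl : ReachE G F x x := ⟨SimpleGraph.Walk.nil, by simp⟩

lemma ReachE.step (h : ReachE G F x a) (hab : G.Adj a b) (hf : s(a,b) ∈ F) :
    ReachE G F x b := by
  obtain ⟨w, hw⟩ := h
  refine ⟨w.append (SimpleGraph.Walk.cons hab SimpleGraph.Walk.nil), ?_⟩
  intro f hf'
  rw [SimpleGraph.Walk.edges_append] at hf'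
  rcases List.mem_append.mp hf' with hf' | hf'
  · exact hw f hf'
  · simp at hf'
    subst hf'
    exact hf

end helpers2

lemma exists_circuit (G : SimpleGraph V) (hconn : G.Connected) (D : Set (Sym2 V))
    (hD : D ⊆ G.edgeSet) (h : ∀ B, IsBond G B → EvenInter D B) {e : Sym2 V} (he : e ∈ D) :
    ∃ C, IsCircuit G C ∧ C ⊆ D ∧ e ∈ C := by
  classical
  induction e using Sym2.ind with
  | _ x y =>
  have hadj : G.Adj x y := hD he
  by_cases hreach : ReachE G (D \ {s(x,y)}) y x
  · obtain ⟨w, hw⟩ := hreach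
    let p : G.Path y x := w.toPath
    have hpe : ∀ f ∈ (p : G.Walk y x).edges, f ∈ D \ {s(x,y)} :=
      fun f hf => hw f (SimpleGraph.Walk.edges_toPath_subset w hf)
    have hne : s(x,y) ∉ (p : G.Walk y x).edges := fun hmem => (hpe _ hmem).2 rfl
    have hcyc := SimpleGraph.Path.cons_isCycle p hadj hne
    refine ⟨{f | f ∈ (SimpleGraph.Walk.cons hadj (p : G.Walk y x)).edges},
      ⟨x, _, hcyc, rfl⟩, ?_, ?_⟩
    · intro f hf
      simp only [Set.mem_setOf_eq, SimpleGraph.Walk.edges_cons, List.mem_cons] at hf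
      rcases hf with rfl | hf
      · exact he
      · exact (hpe f hf).1
    · rw [Set.mem_setOf_eq, SimpleGraph.Walk.edges_cons]
      exact List.mem_cons_self
  · exfalso
    set A0 : Set V := {v | ReachE G (D \ {s(x,y)}) x v} with hA0
    set A1 : Set V := {v | Reach G A0 x v} with hA1
    set Y : Set V := {v | Reach G (A1ᶜ) y v} with hY
    have hx0 : x ∈ A0 := reachE_refl
    have hy0 : y ∉ A0 := by
      intro hy
      obtain ⟨w, hw⟩ := hy
      exact hreach ⟨w.reverse, fun f hf => hw f (by
        rwa [SimpleGraph.Walk.edges_reverse, List.mem_reverse] at hf)⟩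
    have hA1sub : A1 ⊆ A0 := fun v hv => hv.mem_right
    have hxA1 : x ∈ A1 := reach_refl hx0
    have hyA1 : y ∉ A1 := fun hy => hy0 (hA1sub hy)
    have hyY : y ∈ Y := reach_refl hyA1
    have hYc : Y ⊆ A1ᶜ := fun v hv => hv.mem_right
    have hxY : x ∉ Y := fun hx => (hYc hx) hxA1
    -- D-edges crossing A0 equal e
    have cut0 : ∀ f, f ∈ D ∩ cutEdges G A0 → f = s(x,y) := by
      rintro f ⟨hfD, a, b, hab, ha, hb, rfl⟩
      by_contra hne
      exact hb (ReachE.step ha hab ⟨hfD, hne⟩)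
    have hcut10 : cutEdges G A1 ⊆ cutEdges G A0 := by
      rintro f ⟨a, b, hab, ha, hb, rfl⟩
      have hbA0 : b ∉ A0 := fun hb0 => hb (Reach.step ha hab hb0)
      exact ⟨a, b, hab, hA1sub ha, hbA0, rfl⟩
    have hcutY1 : cutEdges G Y ⊆ cutEdges G A1 := by
      rintro f ⟨a, b, hab, ha, hb, rfl⟩
      have hbA1 : b ∈ A1 := by
        by_contra hb1
        exact hb (Reach.step ha hab hb1)
      exact ⟨b, a, hab.symm, hbA1, hYc ha, Sym2.eq_swap.symm⟩
    have heY : s(x,y) ∈ cutEdges G Y := ⟨y, x, hadj.symm, hyY, hxY, Sym2.eq_swap.symm⟩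
    -- connectivity of Y
    have hYwalk : ∀ v ∈ Y, ∃ w : G.Walk y v, ∀ u ∈ w.support, u ∈ Y := by
      intro v hv
      obtain ⟨w, hw⟩ := hv
      exact ⟨w, fun u hu => reach_of_mem_support w hw hu⟩
    -- connectivity of Yᶜ
    have hA1Yc : ∀ v ∈ A1, Reach G Yᶜ x v := by
      intro v hv
      obtain ⟨w, hw⟩ := hv
      refine ⟨w, fun u hu => ?_⟩
      have : u ∈ A1 := reach_of_mem_support w hw hu
      exact fun huY => (hYc huY) this
    have hYcwalk : ∀ v, v ∉ Y → Reach G Yᶜ x v := by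
      have hstep : ∀ a b, G.Adj a b → (a ∈ Y ∨ Reach G Yᶜ x a) → (b ∈ Y ∨ Reach G Yᶜ x b) := by
        rintro a b hab (ha | ha)
        · by_cases hbY : b ∈ Y
          · exact Or.inl hbY
          · refine Or.inr (hA1Yc b ?_)
            by_contra hb1
            exact hbY (Reach.step ha hab hb1)
        · by_cases hbY : b ∈ Y
          · exact Or.inl hbY
          · exact Or.inr (Reach.step ha hab hbY)
      intro v hv
      obtain ⟨w⟩ := hconn.preconnected x v
      exact (walk_prop hstep w (Or.inr (hA1Yc x hxA1))).resolve_left hv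
    -- B := cutEdges G Y is a bond
    have hbond : IsBond G (cutEdges G Y) := by
      refine ⟨⟨Y, rfl⟩, fun hem => (hem ▸ heY : s(x,y) ∈ (∅ : Set (Sym2 V))), ?_⟩
      rintro Cz ⟨Z, rfl⟩ hCne hsub
      have hinY : ∀ a b, G.Adj a b → a ∈ Y → b ∈ Y → (a ∈ Z ↔ b ∈ Z) := by
        intro a b hab ha hb
        by_contra hne
        have hmem : s(a,b) ∈ cutEdges G Z := by
          rw [mem_cutEdges_iff hab]; tauto
        have := hsub hmem
        rw [mem_cutEdges_iff hab] at this; tauto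
      have hinYc : ∀ a b, G.Adj a b → a ∈ Yᶜ → b ∈ Yᶜ → (a ∈ Z ↔ b ∈ Z) := by
        intro a b hab ha hb
        by_contra hne
        have hmem : s(a,b) ∈ cutEdges G Z := by
          rw [mem_cutEdges_iff hab]; tauto
        have := hsub hmem
        rw [mem_cutEdges_iff hab] at this
        exact hne (by tauto)
      have hYside : ∀ v ∈ Y, (y ∈ Z ↔ v ∈ Z) := by
        intro v hv
        obtain ⟨w, hw⟩ := hYwalk v hv
        exact reach_same_side hinY w hw
      have hYcside : ∀ v, v ∉ Y → (x ∈ Z ↔ v ∈ Z) := by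
        intro v hv
        obtain ⟨w, hw⟩ := hYcwalk v hv
        exact reach_same_side hinYc w hw
      obtain ⟨f, hf⟩ := Set.nonempty_iff_ne_empty.mpr hCne
      obtain ⟨a, b, hab, haZ, hbZ, rfl⟩ := hf
      by_cases hyZ : y ∈ Z
      · by_cases hxZ : x ∈ Z
        · exfalso
          rcases em (b ∈ Y) with hbY | hbY
          · exact hbZ ((hYside b hbY).mp hyZ)
          · exact hbZ ((hYcside b hbY).mp hxZ)
        · have hZY : Z = Y := by
            apply Set.Subset.antisymm
            · intro v hv
              by_contra hvY
              exact hxZ ((hYcside v hvY).mpr hv)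
            · exact fun v hv => (hYside v hv).mp hyZ
          rw [hZY]
      · by_cases hxZ : x ∈ Z
        · have hZYc : Z = Yᶜ := by
            apply Set.Subset.antisymm
            · exact fun v hv hvY => hyZ ((hYside v hvY).mpr hv)
            · exact fun v hv => (hYcside v hv).mp hxZ
          rw [hZYc, cutEdges_compl]
        · exfalso
          rcases em (a ∈ Y) with haY | haY
          · exact hyZ ((hYside a haY).mpr haZ)
          · exact hxZ ((hYcside a haY).mpr haZ)
    have hDB : D ∩ cutEdges G Y = {s(x,y)} := by
      apply Set.Subset.antisymm
      · rintro f ⟨hfD, hfB⟩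
        exact cut0 f ⟨hfD, hcut10 (hcutY1 hfB)⟩
      · rintro f rfl
        exact ⟨he, heY⟩
    have hev := (h _ hbond).2
    rw [hDB, Set.ncard_singleton] at hev
    exact (Nat.not_even_one) hev

lemma evenInter_diff {D C B : Set (Sym2 V)} (hDB : EvenInter D B) (hfin : (C ∩ B).Finite)
    (hev : Even (C ∩ B).ncard) (hCD : C ⊆ D) : EvenInter (D \ C) B := by
  have hsub : C ∩ B ⊆ D ∩ B := Set.inter_subset_inter_left B hCD
  have heq : (D \ C) ∩ B = (D ∩ B) \ (C ∩ B) := by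
    ext f
    simp only [Set.mem_inter_iff, Set.mem_diff]
    tauto
  refine ⟨?_, ?_⟩
  · rw [heq]; exact hDB.1.diff
  · rw [heq, Set.ncard_diff hsub hfin]
    obtain ⟨i, hi⟩ := hDB.2
    obtain ⟨j, hj⟩ := hev
    exact ⟨i - j, by omega⟩

lemma countable_of_conn (G : SimpleGraph V) (hconn : G.Connected)
    (hlf : ∀ x : V, (G.neighborSet x).Finite) : Countable V := by
  obtain ⟨r⟩ := hconn.nonempty
  let T : ℕ → Set V := fun n => {v | ∃ w : G.Walk v r, w.length ≤ n}
  have hfin : ∀ n, (T n).Finite := by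
    intro n
    induction n with
    | zero =>
      apply Set.Finite.subset (Set.finite_singleton r)
      rintro v ⟨w, hw⟩
      have := w.eq_of_length_eq_zero (Nat.le_zero.mp hw)
      simp [this]
    | succ n ih =>
      apply Set.Finite.subset (ih.union (ih.biUnion (fun v _ => hlf v)))
      rintro v ⟨w, hw⟩
      cases w with
      | nil => exact Or.inl ⟨SimpleGraph.Walk.nil, Nat.zero_le n⟩
      | cons h q =>
        rw [SimpleGraph.Walk.length_cons, Nat.succ_le_succ_iff] at hw
        exact Or.inr (Set.mem_biUnion ⟨q, hw⟩ h.symm)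
  have huniv : (Set.univ : Set V) = ⋃ n, T n := by
    apply Set.Subset.antisymm
    · intro v _
      obtain ⟨w⟩ := hconn.preconnected v r
      exact Set.mem_iUnion.mpr ⟨w.length, w, le_refl _⟩
    · exact Set.subset_univ _
  exact Set.countable_univ_iff.mp (huniv ▸ Set.countable_iUnion (fun n => (hfin n).countable))

/-- In a connected locally finite graph, an edge set having finite even intersection
with every bond is the union of a pairwise disjoint countable family of finite
circuits. -/
theorem stmt_15 (G : SimpleGraph V) (hconn : G.Connected)
    (hlf : ∀ x : V, (G.neighborSet x).Finite)
    (D : Set (Sym2 V)) (hD : D ⊆ G.edgeSet)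
    (h : ∀ B, IsBond G B → EvenInter D B) :
    ∃ I : Set (Set (Sym2 V)), I.Countable ∧ (∀ C ∈ I, IsCircuit G C) ∧
      I.Pairwise Disjoint ∧ D = ⋃₀ I := by
  classical
  have hcv : Countable V := countable_of_conn G hconn hlf
  by_cases hD0 : D = ∅
  · exact ⟨∅, Set.countable_empty, by simp, Set.pairwise_empty _, by simp [hD0]⟩
  obtain ⟨f, hf⟩ := (Set.to_countable D).exists_eq_range (Set.nonempty_iff_ne_empty.mpr hD0)
  let pick : Set (Sym2 V) → Sym2 V → Set (Sym2 V) := fun D' e =>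
    if hh : ∃ C, IsCircuit G C ∧ C ⊆ D' ∧ e ∈ C then Classical.choose hh else ∅
  let Ds : ℕ → Set (Sym2 V) := fun n => Nat.rec D (fun m prev => prev \ pick prev (f m)) n
  have hDsS : ∀ n, Ds (n+1) = Ds n \ pick (Ds n) (f n) := fun n => rfl
  have hinv : ∀ n, Ds n ⊆ D ∧ ∀ B, IsBond G B → EvenInter (Ds n) B := by
    intro n
    induction n with
    | zero => exact ⟨subset_rfl, h⟩
    | succ n ih =>
      rw [hDsS]
      rcases em (∃ C : Set (Sym2 V), IsCircuit G C ∧ C ⊆ Ds n ∧ (f n) ∈ C) with hh | hh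
      · have hspec := Classical.choose_spec hh
        have hpick : pick (Ds n) (f n) = Classical.choose hh := dif_pos hh
        rw [hpick]
        refine ⟨Set.diff_subset.trans ih.1, ?_⟩
        intro B hB
        obtain ⟨A, rfl⟩ := hB.1
        obtain ⟨hfin, hev⟩ := circuit_inter_cut hspec.1 A
        exact evenInter_diff (ih.2 _ hB) hfin hev hspec.2.1
      · have hp : pick (Ds n) (f n) = ∅ := dif_neg hh
        rw [hp, Set.diff_empty]
        exact ih
  have hpicksub : ∀ n, pick (Ds n) (f n) ⊆ Ds n := by
    intro n
    rcases em (∃ C : Set (Sym2 V), IsCircuit G C ∧ C ⊆ Ds n ∧ (f n) ∈ C) with hh | hh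
    · rw [show pick (Ds n) (f n) = Classical.choose hh from dif_pos hh]
      exact (Classical.choose_spec hh).2.1
    · rw [show pick (Ds n) (f n) = ∅ from dif_neg hh]
      exact Set.empty_subset _
  have hmono : ∀ m n, m ≤ n → Ds n ⊆ Ds m := by
    intro m n hmn
    refine Nat.le_induction subset_rfl (fun k hmk ih => ?_) n hmn
    rw [hDsS]
    exact Set.diff_subset.trans ih
  let Cs : ℕ → Set (Sym2 V) := fun n => pick (Ds n) (f n)
  let Idx : Set ℕ := {n | f n ∈ Ds n}
  have hchoice : ∀ n, f n ∈ Ds n →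
      IsCircuit G (Cs n) ∧ Cs n ⊆ Ds n ∧ f n ∈ Cs n := by
    intro n hn
    have hh : ∃ C, IsCircuit G C ∧ C ⊆ Ds n ∧ f n ∈ C :=
      exists_circuit G hconn (Ds n) ((hinv n).1.trans hD) (hinv n).2 hn
    rw [show Cs n = Classical.choose hh from dif_pos hh]
    exact Classical.choose_spec hh
  refine ⟨Cs '' Idx, (Set.Countable.mono (Set.subset_univ Idx) Set.countable_univ).image Cs, ?_, ?_, ?_⟩
  · rintro C ⟨n, hn, rfl⟩
    exact (hchoice n hn).1
  · rintro C ⟨n, _, rfl⟩ C' ⟨m, _, rfl⟩ hne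
    have key : ∀ a b : ℕ, a < b → Disjoint (Cs a) (Cs b) := by
      intro a b hab
      have h1 : Cs b ⊆ Ds a \ Cs a := (hpicksub b).trans (hmono (a+1) b hab)
      exact Set.disjoint_right.mpr (fun x hx => (h1 hx).2)
    rcases lt_trichotomy n m with hlt | heq | hlt
    · exact key n m hlt
    · exact absurd (by rw [heq]) hne
    · exact (key m n hlt).symm
  · apply Set.Subset.antisymm
    · intro e heD
      rw [hf] at heD
      obtain ⟨n, rfl⟩ := Set.mem_range.mp heD
      rcases em (f n ∈ Ds n) with hn | hn
      · exact Set.mem_sUnion.mpr ⟨Cs n, ⟨n, hn, rfl⟩, (hchoice n hn).2.2⟩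
      · haveI : DecidablePred fun k => f n ∉ Ds k := Classical.decPred _
        have hex : ∃ k, f n ∉ Ds k := ⟨n, hn⟩
        have hk : f n ∉ Ds (Nat.find hex) := Nat.find_spec hex
        have hk0 : Nat.find hex ≠ 0 := by
          intro h0'
          rw [h0'] at hk
          exact hk (show f n ∈ D from hf.symm ▸ Set.mem_range_self n)
        obtain ⟨m, hm'⟩ := Nat.exists_eq_succ_of_ne_zero hk0
        rw [hm'] at hk
        have hlt : m < Nat.find hex := by omega
        have hm : f n ∈ Ds m := by
          refine Classical.byContradiction fun hmem => ?_
          exact Nat.find_min hex hlt hmem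
        have hcs : f n ∈ Cs m := by
          by_contra hc
          exact hk ⟨hm, hc⟩
        have hmIdx : f m ∈ Ds m := by
          refine Classical.byContradiction fun hIdx => ?_
          have hcse : Cs m = ∅ := by
            apply dif_neg
            rintro ⟨C, -, hsub, hmem⟩
            exact hIdx (hsub hmem)
          rw [hcse] at hcs
          exact hcs
        exact Set.mem_sUnion.mpr ⟨Cs m, ⟨m, hmIdx, rfl⟩, hcs⟩
    · rintro e ⟨C, ⟨n, hn, rfl⟩, heC⟩
      exact (hinv n).1 (hpicksub n heC)
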